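/- Let c ∈ ℝ \ {0}, ρ(r) = -1/(r - i c), ρ̄(r) = conj(ρ(r)), and consider twice continuously differentiable x : (0,∞) → ℂ. Then x satisfies the ODE ρ² d/dr [ (ρ̄/ρ³) d/dr ( (ρ/ρ̄) x ) ] = 0 on (0,∞) if and only if there exist constants A, B, C ∈ ℂ such that x(r) = A ρ(r)/ρ̄(r) + B ρ̄(r)/ρ(r) + C (ρ(r) + ρ̄(r)). Moreover, if additionally x(r) = O(r^{-2}) as r → ∞, then x ≡ 0. -/

import Mathlib

open Complex Filter Asymptotics

/-- Kerr optical scalar ρ(r) = -1/(r - i c). -/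
noncomputable def rhoK (c : ℝ) (r : ℝ) : ℂ := -1 / ((r : ℂ) - c * Complex.I)

/-- Complex conjugate ρ̄. -/
noncomputable def rhoKbar (c : ℝ) (r : ℝ) : ℂ := (starRingEnd ℂ) (rhoK c r)

namespace Stmt2Aux
variable {c : ℝ}

lemma z_ne (hc : c ≠ 0) (s : ℝ) : (s : ℂ) - c * I ≠ 0 := by
  intro h
  have := congrArg Complex.im h
  simp at this
  exact hc this

lemma w_ne (hc : c ≠ 0) (s : ℝ) : (s : ℂ) + c * I ≠ 0 := by
  intro h
  have := congrArg Complex.im h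
  simp at this
  exact hc this

lemma rhoK_def (s : ℝ) : rhoK c s = -1 / ((s : ℂ) - c * I) := rfl

lemma rhoKbar_def (s : ℝ) : rhoKbar c s = -1 / ((s : ℂ) + c * I) := by
  simp [rhoKbar, rhoK, map_div₀]

lemma rhoK_ne (hc : c ≠ 0) (s : ℝ) : rhoK c s ≠ 0 := by
  rw [rhoK_def]
  exact div_ne_zero (by norm_num) (z_ne hc s)

lemma rhoKbar_ne (hc : c ≠ 0) (s : ℝ) : rhoKbar c s ≠ 0 := by
  rw [rhoKbar_def]
  exact div_ne_zero (by norm_num) (w_ne hc s)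

lemma u_eq (hc : c ≠ 0) (s : ℝ) :
    rhoK c s / rhoKbar c s = ((s : ℂ) + c * I) / ((s : ℂ) - c * I) := by
  rw [div_eq_div_iff (rhoKbar_ne hc s) (z_ne hc s), rhoK_def, rhoKbar_def]
  have hz := z_ne hc s
  have hw := w_ne hc s
  field_simp

lemma v_eq (hc : c ≠ 0) (s : ℝ) :
    rhoKbar c s / rhoK c s = ((s : ℂ) - c * I) / ((s : ℂ) + c * I) := by
  rw [div_eq_div_iff (rhoK_ne hc s) (w_ne hc s), rhoK_def, rhoKbar_def]
  have hz := z_ne hc s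
  have hw := w_ne hc s
  field_simp

lemma q_eq (hc : c ≠ 0) (s : ℝ) :
    rhoKbar c s / (rhoK c s) ^ 3 = ((s : ℂ) - c * I) ^ 3 / ((s : ℂ) + c * I) := by
  rw [rhoK_def, rhoKbar_def]
  have hz := z_ne hc s
  have hw := w_ne hc s
  field_simp

lemma sum_eq (hc : c ≠ 0) (s : ℝ) :
    rhoK c s + rhoKbar c s = -(2 * s) / (((s : ℂ) - c * I) * ((s : ℂ) + c * I)) := by
  rw [rhoK_def, rhoKbar_def]
  have hz := z_ne hc s
  have hw := w_ne hc s
  field_simp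
  ring

lemma zw_eq (s : ℝ) : ((s : ℂ) - c * I) * ((s : ℂ) + c * I) = (s : ℂ) ^ 2 + (c : ℂ) ^ 2 := by
  have : (I : ℂ) ^ 2 = -1 := Complex.I_sq
  ring_nf
  rw [this]; ring

lemma hasDerivAt_z (s : ℝ) : HasDerivAt (fun t : ℝ => (t : ℂ) - c * I) 1 s :=
  ((hasDerivAt_id s).ofReal_comp).sub_const _

lemma hasDerivAt_w (s : ℝ) : HasDerivAt (fun t : ℝ => (t : ℂ) + c * I) 1 s :=
  ((hasDerivAt_id s).ofReal_comp).add_const _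


lemma hasDerivAt_tz2 (hc : c ≠ 0) (s : ℝ) :
    HasDerivAt (fun t : ℝ => (t : ℂ) / ((t : ℂ) - c * I) ^ 2)
      (-((s : ℂ) + c * I) / ((s : ℂ) - c * I) ^ 3) s := by
  have hz := z_ne hc s
  have hid : HasDerivAt (fun t : ℝ => (t : ℂ)) 1 s := (hasDerivAt_id s).ofReal_comp
  have hz2 : HasDerivAt (fun t : ℝ => ((t : ℂ) - c * I) ^ 2)
      (2 * ((s : ℂ) - c * I)) s := by
    have h0 := (hasDerivAt_z (c := c) s).mul (hasDerivAt_z (c := c) s)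
    have heq : (fun t : ℝ => ((t : ℂ) - c * I) ^ 2)
        = fun t : ℝ => ((t : ℂ) - c * I) * ((t : ℂ) - c * I) := by funext t; ring
    rw [heq]
    convert h0 using 1
    · rfl
    · rfl
    ring
  have h := hid.div hz2 (pow_ne_zero 2 hz)
  convert h using 1
  · rfl
  · rfl
  field_simp
  ring

lemma hasDerivAt_g (hc : c ≠ 0) (A B C : ℂ) (s : ℝ) :
    HasDerivAt (fun t : ℝ =>
        A * ((t : ℂ) + c * I) ^ 2 / ((t : ℂ) - c * I) ^ 2 + B
          - 2 * C * (t : ℂ) / ((t : ℂ) - c * I) ^ 2)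
      ((2 * C - 4 * c * I * A) * (((s : ℂ) + c * I) / ((s : ℂ) - c * I) ^ 3)) s := by
  have hz := z_ne hc s
  have hid : HasDerivAt (fun t : ℝ => (t : ℂ)) 1 s := (hasDerivAt_id s).ofReal_comp
  have hz2 : HasDerivAt (fun t : ℝ => ((t : ℂ) - c * I) ^ 2)
      (2 * ((s : ℂ) - c * I)) s := by
    have h0 := (hasDerivAt_z (c := c) s).mul (hasDerivAt_z (c := c) s)
    have heq : (fun t : ℝ => ((t : ℂ) - c * I) ^ 2)
        = fun t : ℝ => ((t : ℂ) - c * I) * ((t : ℂ) - c * I) := by funext t; ring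
    rw [heq]
    convert h0 using 1
    · rfl
    · rfl
    ring
  have hw2 : HasDerivAt (fun t : ℝ => ((t : ℂ) + c * I) ^ 2)
      (2 * ((s : ℂ) + c * I)) s := by
    have h0 := (hasDerivAt_w (c := c) s).mul (hasDerivAt_w (c := c) s)
    have heq : (fun t : ℝ => ((t : ℂ) + c * I) ^ 2)
        = fun t : ℝ => ((t : ℂ) + c * I) * ((t : ℂ) + c * I) := by funext t; ring
    rw [heq]
    convert h0 using 1
    · rfl
    · rfl
    ring
  have h1 := (hw2.const_mul A).div hz2 (pow_ne_zero 2 hz)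
  have h3 := (hid.const_mul (2 * C)).div hz2 (pow_ne_zero 2 hz)
  have h := (h1.add_const B).sub h3
  convert h using 1
  · rfl
  · rfl
  have hI : (I : ℂ) ^ 2 = -1 := Complex.I_sq
  field_simp
  ring_nf

lemma constOn {f : ℝ → ℂ} (hf : DifferentiableOn ℝ f (Set.Ioi 0))
    (h0 : ∀ s ∈ Set.Ioi (0 : ℝ), deriv f s = 0) {a b : ℝ}
    (ha : a ∈ Set.Ioi (0 : ℝ)) (hb : b ∈ Set.Ioi (0 : ℝ)) : f a = f b := by
  apply (convex_Ioi (0 : ℝ)).is_const_of_fderivWithin_eq_zero hf ?_ ha hb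
  intro x hx
  rw [fderivWithin_of_isOpen isOpen_Ioi hx]
  refine ContinuousLinearMap.ext fun t => ?_
  rw [ContinuousLinearMap.zero_apply, fderiv_eq_smul_deriv, h0 x hx, smul_zero]

end Stmt2Aux


set_option maxHeartbeats 1600000 in
open Stmt2Aux in
/-- kernel of the homogeneous GHZ transport operator for x_{m m̄},
and vanishing under O(r⁻²) decay. -/
theorem stmt2 (c : ℝ) (hc : c ≠ 0) (x : ℝ → ℂ)
    (hx : ContDiffOn ℝ 2 x (Set.Ioi 0)) :
    ((∀ r > (0 : ℝ),
        (rhoK c r) ^ 2 *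
          deriv (fun s =>
            (rhoKbar c s / (rhoK c s) ^ 3) *
              deriv (fun t => (rhoK c t / rhoKbar c t) * x t) s) r = 0) ↔
      (∃ A B C : ℂ, ∀ r > (0 : ℝ),
        x r = A * (rhoK c r / rhoKbar c r) + B * (rhoKbar c r / rhoK c r)
            + C * (rhoK c r + rhoKbar c r))) ∧
    ((∀ r > (0 : ℝ),
        (rhoK c r) ^ 2 *
          deriv (fun s =>
            (rhoKbar c s / (rhoK c s) ^ 3) *
              deriv (fun t => (rhoK c t / rhoKbar c t) * x t) s) r = 0) →
      (x =O[atTop] fun r : ℝ => (r ^ 2)⁻¹) →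
      ∀ r > (0 : ℝ), x r = 0) := by
  set y : ℝ → ℂ := fun t => (rhoK c t / rhoKbar c t) * x t with hy_def
  set F : ℝ → ℂ := fun s => (rhoKbar c s / (rhoK c s) ^ 3) * deriv y s with hF_def
  have key : (∀ r > (0 : ℝ), (rhoK c r) ^ 2 * deriv F r = 0) ↔
      (∃ A B C : ℂ, ∀ r > (0 : ℝ),
        x r = A * (rhoK c r / rhoKbar c r) + B * (rhoKbar c r / rhoK c r)
            + C * (rhoK c r + rhoKbar c r)) := by
    constructor
    · -- forward direction
      intro h
      -- y is C² on (0,∞)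
      have hcu : ContDiff ℝ 2 (fun s : ℝ => ((s : ℂ) + c * I) / ((s : ℂ) - c * I)) := by
        have ha : ContDiff ℝ 2 (fun s : ℝ => (s : ℂ) + c * I) :=
          (Complex.ofRealCLM.contDiff).add contDiff_const
        have hb : ContDiff ℝ 2 (fun s : ℝ => (s : ℂ) - c * I) :=
          (Complex.ofRealCLM.contDiff).sub contDiff_const
        simp only [div_eq_mul_inv]
        exact ha.mul (hb.inv (fun s => z_ne hc s))
      have hu : (fun s : ℝ => rhoK c s / rhoKbar c s)
          = fun s : ℝ => ((s : ℂ) + c * I) / ((s : ℂ) - c * I) := funext (u_eq hc)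
      have hy : ContDiffOn ℝ 2 y (Set.Ioi 0) := by
        have h1 : ContDiffOn ℝ 2 (fun s : ℝ => rhoK c s / rhoKbar c s) (Set.Ioi 0) := by
          rw [hu]; exact hcu.contDiffOn
        exact h1.mul hx
      have hdy : ContDiffOn ℝ 1 (deriv y) (Set.Ioi 0) :=
        hy.deriv_of_isOpen isOpen_Ioi (by norm_num)
      have hq : ContDiff ℝ 1 (fun s : ℝ => ((s : ℂ) - c * I) ^ 3 / ((s : ℂ) + c * I)) := by
        have ha : ContDiff ℝ 1 (fun s : ℝ => ((s : ℂ) - c * I) ^ 3) :=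
          ((Complex.ofRealCLM.contDiff).sub contDiff_const).pow 3
        have hb : ContDiff ℝ 1 (fun s : ℝ => (s : ℂ) + c * I) :=
          (Complex.ofRealCLM.contDiff).add contDiff_const
        simp only [div_eq_mul_inv]
        exact ha.mul (hb.inv (fun s => w_ne hc s))
      have hqF : (fun s : ℝ => rhoKbar c s / (rhoK c s) ^ 3)
          = fun s : ℝ => ((s : ℂ) - c * I) ^ 3 / ((s : ℂ) + c * I) := funext (q_eq hc)
      have hFdiff : DifferentiableOn ℝ F (Set.Ioi 0) := by
        have h1 : ContDiffOn ℝ 1 (fun s : ℝ => rhoKbar c s / (rhoK c s) ^ 3) (Set.Ioi 0) := by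
          rw [hqF]; exact hq.contDiffOn
        exact (h1.mul hdy).differentiableOn one_ne_zero
      have hF0 : ∀ s ∈ Set.Ioi (0 : ℝ), deriv F s = 0 := by
        intro s hs
        exact (mul_eq_zero.mp (h s hs)).resolve_left (pow_ne_zero 2 (rhoK_ne hc s))
      obtain ⟨K, hK⟩ : ∃ K : ℂ, ∀ s ∈ Set.Ioi (0 : ℝ), F s = K :=
        ⟨F 1, fun s hs => constOn hFdiff hF0 hs (by norm_num)⟩
      have hyd : ∀ s ∈ Set.Ioi (0 : ℝ),
          deriv y s = K * (((s : ℂ) + c * I) / ((s : ℂ) - c * I) ^ 3) := by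
        intro s hs
        have h1 : (rhoKbar c s / (rhoK c s) ^ 3) * deriv y s = K := hK s hs
        rw [q_eq hc s] at h1
        have hz := z_ne hc s
        have hw := w_ne hc s
        field_simp at h1 ⊢
        linear_combination h1
      set G : ℝ → ℂ := fun s => y s + K * ((s : ℂ) / ((s : ℂ) - c * I) ^ 2) with hGdef
      have hG' : ∀ s ∈ Set.Ioi (0 : ℝ), HasDerivAt G 0 s := by
        intro s hs
        have hy1 : DifferentiableAt ℝ y s :=
          (hy.differentiableOn (by norm_num)).differentiableAt (isOpen_Ioi.mem_nhds hs)
        have h2 := (hasDerivAt_tz2 hc s).const_mul K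
        have h3 := hy1.hasDerivAt.add h2
        have h4 : deriv y s + K * (-((s : ℂ) + c * I) / ((s : ℂ) - c * I) ^ 3) = 0 := by
          rw [hyd s hs]; ring
        rw [h4] at h3
        exact h3
      have hGdiff : DifferentiableOn ℝ G (Set.Ioi 0) :=
        fun s hs => ((hG' s hs).differentiableAt).differentiableWithinAt
      have hG0 : ∀ s ∈ Set.Ioi (0 : ℝ), deriv G s = 0 := fun s hs => (hG' s hs).deriv
      obtain ⟨L, hL⟩ : ∃ L : ℂ, ∀ s ∈ Set.Ioi (0 : ℝ), G s = L :=
        ⟨G 1, fun s hs => constOn hGdiff hG0 hs (by norm_num)⟩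
      refine ⟨0, L, K / 2, ?_⟩
      intro r hr
      have h1 : (rhoK c r / rhoKbar c r) * x r + K * ((r : ℂ) / ((r : ℂ) - c * I) ^ 2)
          = L := hL r hr
      rw [u_eq hc r] at h1
      rw [u_eq hc r, v_eq hc r, sum_eq hc r]
      have hz := z_ne hc r
      have hw := w_ne hc r
      have h2 : ((r : ℂ) + c * I) * x r * ((r : ℂ) - c * I) + K * r
          = L * ((r : ℂ) - c * I) ^ 2 := by
        apply mul_left_cancel₀ hz
        field_simp at h1
        linear_combination ((r : ℂ) - c * I) * h1
      have h3 : x r = (L * ((r : ℂ) - c * I) ^ 2 - K * r)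
          / (((r : ℂ) - c * I) * ((r : ℂ) + c * I)) := by
        rw [eq_div_iff (mul_ne_zero hz hw)]
        linear_combination h2
      rw [h3]
      field_simp
      ring
    · -- reverse direction
      rintro ⟨A, B, C, hABC⟩ r hr
      have hFconst : ∀ s ∈ Set.Ioi (0 : ℝ), F s = 2 * C - 4 * c * I * A := by
        intro s hs
        have hyg : Set.EqOn y (fun t : ℝ =>
            A * ((t : ℂ) + c * I) ^ 2 / ((t : ℂ) - c * I) ^ 2 + B
              - 2 * C * (t : ℂ) / ((t : ℂ) - c * I) ^ 2) (Set.Ioi 0) := by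
          intro t ht
          show (rhoK c t / rhoKbar c t) * x t = _
          rw [hABC t ht, u_eq hc t, v_eq hc t, sum_eq hc t]
          have hz := z_ne hc t
          have hw := w_ne hc t
          field_simp
          ring
        have hev : y =ᶠ[nhds s] _ := Filter.eventuallyEq_of_mem (isOpen_Ioi.mem_nhds hs) hyg
        have hd : deriv y s = (2 * C - 4 * c * I * A)
            * (((s : ℂ) + c * I) / ((s : ℂ) - c * I) ^ 3) := by
          rw [hev.deriv_eq, (hasDerivAt_g hc A B C s).deriv]
        show (rhoKbar c s / (rhoK c s) ^ 3) * deriv y s = _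
        rw [hd, q_eq hc s]
        have hz := z_ne hc s
        have hw := w_ne hc s
        field_simp
      have hFev : F =ᶠ[nhds r] fun _ => 2 * C - 4 * c * I * A :=
        Filter.eventuallyEq_of_mem (isOpen_Ioi.mem_nhds hr) hFconst
      rw [hFev.deriv_eq, deriv_const, mul_zero]
  refine ⟨key, ?_⟩
  -- part 2 : decay
  intro h hO r hr
  obtain ⟨A, B, C, hABC⟩ := key.mp h
  have hzinv : Tendsto (fun s : ℝ => ((s : ℂ) - c * I)⁻¹) atTop (nhds 0) := by
    apply squeeze_zero_norm' (a := fun s : ℝ => s⁻¹) ?_ tendsto_inv_atTop_zero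
    filter_upwards [eventually_ge_atTop 1] with s hs
    rw [norm_inv]
    have h1 : s ≤ ‖(s : ℂ) - c * I‖ := by
      have h2 : |((s : ℂ) - c * I).re| ≤ ‖((s : ℂ) - c * I)‖ :=
        Complex.abs_re_le_norm _
      have h3 : ((s : ℂ) - c * I).re = s := by simp
      rw [h3] at h2
      exact le_trans (le_abs_self s) h2
    exact inv_anti₀ (by linarith) h1
  have hwinv : Tendsto (fun s : ℝ => ((s : ℂ) + c * I)⁻¹) atTop (nhds 0) := by
    apply squeeze_zero_norm' (a := fun s : ℝ => s⁻¹) ?_ tendsto_inv_atTop_zero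
    filter_upwards [eventually_ge_atTop 1] with s hs
    rw [norm_inv]
    have h1 : s ≤ ‖(s : ℂ) + c * I‖ := by
      have h2 : |((s : ℂ) + c * I).re| ≤ ‖((s : ℂ) + c * I)‖ :=
        Complex.abs_re_le_norm _
      have h3 : ((s : ℂ) + c * I).re = s := by simp
      rw [h3] at h2
      exact le_trans (le_abs_self s) h2
    exact inv_anti₀ (by linarith) h1
  have t1 : Tendsto (fun s : ℝ => ((s : ℂ) + c * I) / ((s : ℂ) - c * I)) atTop (nhds 1) := by
    have hEq : (fun s : ℝ => ((s : ℂ) + c * I) / ((s : ℂ) - c * I))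
        = fun s : ℝ => 1 + (2 * c * I) * ((s : ℂ) - c * I)⁻¹ := by
      funext s
      have hz := z_ne hc s
      field_simp
      ring
    rw [hEq]
    have := (tendsto_const_nhds : Tendsto (fun _ : ℝ => (1 : ℂ)) atTop (nhds 1)).add
      (hzinv.const_mul (2 * c * I))
    simpa using this
  have t2 : Tendsto (fun s : ℝ => ((s : ℂ) - c * I) / ((s : ℂ) + c * I)) atTop (nhds 1) := by
    have hEq : (fun s : ℝ => ((s : ℂ) - c * I) / ((s : ℂ) + c * I))
        = fun s : ℝ => 1 - (2 * c * I) * ((s : ℂ) + c * I)⁻¹ := by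
      funext s
      have hw := w_ne hc s
      field_simp
      ring
    rw [hEq]
    have := (tendsto_const_nhds : Tendsto (fun _ : ℝ => (1 : ℂ)) atTop (nhds 1)).sub
      (hwinv.const_mul (2 * c * I))
    simpa using this
  have t3 : Tendsto (fun s : ℝ => -(2 * (s : ℂ)) / (((s : ℂ) - c * I) * ((s : ℂ) + c * I)))
      atTop (nhds 0) := by
    have haux : Tendsto (fun s : ℝ => 2 * s⁻¹) atTop (nhds 0) := by
      simpa using tendsto_inv_atTop_zero.const_mul (2 : ℝ)
    apply squeeze_zero_norm' (a := fun s : ℝ => 2 * s⁻¹) ?_ haux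
    filter_upwards [eventually_ge_atTop 1] with s hs
    rw [zw_eq]
    have hden : ((s : ℂ) ^ 2 + (c : ℂ) ^ 2) = ((s ^ 2 + c ^ 2 : ℝ) : ℂ) := by push_cast; ring
    have hnum : -(2 * (s : ℂ)) = ((-(2 * s) : ℝ) : ℂ) := by push_cast; ring
    rw [hden, hnum, ← Complex.ofReal_div, Complex.norm_real]
    rw [Real.norm_eq_abs, abs_div, abs_neg]
    have hs0 : (0 : ℝ) < s := by linarith
    have h2 : |2 * s| = 2 * s := abs_of_pos (by linarith)
    have h3 : |s ^ 2 + c ^ 2| = s ^ 2 + c ^ 2 := abs_of_pos (by positivity)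
    rw [h2, h3]
    rw [div_le_iff₀ (by positivity)]
    have : 2 * s⁻¹ * (s ^ 2 + c ^ 2) = 2 * s + 2 * s⁻¹ * c ^ 2 := by
      field_simp
    rw [this]
    have : 0 ≤ 2 * s⁻¹ * c ^ 2 := by positivity
    linarith
  have hxlim : Tendsto x atTop (nhds (A + B)) := by
    have hev : ∀ᶠ s : ℝ in atTop, x s =
        A * (((s : ℂ) + c * I) / ((s : ℂ) - c * I))
          + B * (((s : ℂ) - c * I) / ((s : ℂ) + c * I))
          + C * (-(2 * (s : ℂ)) / (((s : ℂ) - c * I) * ((s : ℂ) + c * I))) := by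
      filter_upwards [eventually_gt_atTop 0] with s hs
      rw [hABC s hs, u_eq hc s, v_eq hc s, sum_eq hc s]
    rw [tendsto_congr' hev]
    have := ((t1.const_mul A).add (t2.const_mul B)).add (t3.const_mul C)
    simpa using this
  have hx0 : Tendsto x atTop (nhds 0) := by
    refine hO.trans_tendsto ?_
    exact ((tendsto_pow_atTop (n := 2) two_ne_zero).inv_tendsto_atTop
      (f := fun s : ℝ => s ^ 2))
  have hAB : A + B = 0 := tendsto_nhds_unique hxlim hx0
  set k : ℂ := 4 * c * I * A - 2 * C with hkdef
  have hxk : ∀ s > (0 : ℝ), x s =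
      k * ((s : ℂ) / (((s : ℂ) - c * I) * ((s : ℂ) + c * I))) := by
    intro s hs
    rw [hABC s hs, u_eq hc s, v_eq hc s, sum_eq hc s]
    have hz := z_ne hc s
    have hw := w_ne hc s
    have hB : B = -A := by linear_combination hAB
    rw [hB, hkdef]
    field_simp
    ring
  have hkl : Tendsto (fun s : ℝ => (s : ℂ) * x s) atTop (nhds k) := by
    have r4 : Tendsto (fun s : ℝ => s ^ 2 / (s ^ 2 + c ^ 2)) atTop (nhds 1) := by
      have hEq : (fun s : ℝ => s ^ 2 / (s ^ 2 + c ^ 2))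
          = fun s : ℝ => 1 - c ^ 2 / (s ^ 2 + c ^ 2) := by
        funext s
        have : s ^ 2 + c ^ 2 ≠ 0 := by positivity
        field_simp
        ring
      rw [hEq]
      have hc2 : Tendsto (fun s : ℝ => c ^ 2 / (s ^ 2 + c ^ 2)) atTop (nhds 0) := by
        have haux : Tendsto (fun s : ℝ => c ^ 2 * (s ^ 2)⁻¹) atTop (nhds 0) := by
          have := ((tendsto_pow_atTop (n := 2) two_ne_zero).inv_tendsto_atTop
            (f := fun s : ℝ => s ^ 2)).const_mul (c ^ 2 : ℝ)
          simpa using this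
        apply squeeze_zero_norm' (a := fun s : ℝ => c ^ 2 * (s ^ 2)⁻¹) ?_ haux
        filter_upwards [eventually_ge_atTop 1] with s hs
        have hs0 : (0 : ℝ) < s := by linarith
        rw [Real.norm_eq_abs, abs_div, _root_.abs_of_nonneg (show (0:ℝ) ≤ c ^ 2 by positivity),
          abs_of_pos (show (0:ℝ) < s ^ 2 + c ^ 2 by positivity)]
        rw [div_le_iff₀ (by positivity), mul_comm (c ^ 2) (s ^ 2)⁻¹, mul_assoc]
        have h5 : (1 : ℝ) ≤ (s ^ 2)⁻¹ * (s ^ 2 + c ^ 2) := by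
          rw [le_inv_mul_iff₀ (by positivity), mul_one]
          nlinarith [sq_nonneg c]
        nlinarith [sq_nonneg c, sq_nonneg s]
      have := (tendsto_const_nhds : Tendsto (fun _ : ℝ => (1 : ℝ)) atTop (nhds 1)).sub hc2
      simpa using this
    have hev : ∀ᶠ s : ℝ in atTop, (s : ℂ) * x s
        = k * ((s ^ 2 / (s ^ 2 + c ^ 2) : ℝ) : ℂ) := by
      filter_upwards [eventually_gt_atTop 0] with s hs
      rw [hxk s hs]
      have hz := z_ne hc s
      have hw := w_ne hc s
      have hne : ((s : ℂ) ^ 2 + (c : ℂ) ^ 2) ≠ 0 := by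
        rw [← zw_eq]; exact mul_ne_zero hz hw
      rw [zw_eq]
      push_cast
      ring
    rw [tendsto_congr' hev]
    have h6 : Tendsto (fun s : ℝ => ((s ^ 2 / (s ^ 2 + c ^ 2) : ℝ) : ℂ)) atTop (nhds 1) := by
      have h7 := (Complex.continuous_ofReal.tendsto 1).comp r4
      simpa only [Function.comp_def, Complex.ofReal_one] using h7
    have := h6.const_mul k
    simpa using this
  have h0l : Tendsto (fun s : ℝ => (s : ℂ) * x s) atTop (nhds 0) := by
    have hO1 : (fun s : ℝ => (s : ℂ)) =O[atTop] fun s : ℝ => s := by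
      apply isBigO_of_le
      intro s
      simp [Complex.norm_real]
    have hO2 : (fun s : ℝ => (s : ℂ) * x s) =O[atTop] fun s : ℝ => s * (s ^ 2)⁻¹ :=
      hO1.mul hO
    refine hO2.trans_tendsto ?_
    have hEq : ∀ᶠ s : ℝ in atTop, s * (s ^ 2)⁻¹ = s⁻¹ := by
      filter_upwards [eventually_gt_atTop 0] with s hs
      field_simp
    rw [tendsto_congr' hEq]
    exact tendsto_inv_atTop_zero
  have hk0 : k = 0 := tendsto_nhds_unique hkl h0l
  rw [hxk r hr, hk0, zero_mul]
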